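/- For every word U ∈ Σ* of length k ≥ 1, there exists exactly one single-rooted minimal word whose left frontier is U, and exactly one double-rooted minimal word whose left frontier is U; moreover, the left frontier of any minimal word contains no occurrence of the symbol 0. Consequently, Ψ restricts to a bijection between the set of single-rooted minimal words of height k and Σ^k, and to a bijection between the set of double-rooted minimal words of height k and Σ^k. -/

import Mathlib

namespace CInfWords

open scoped Classical

/-- Run-length encoding Δ of a word. -/
def rle : List ℕ → List ℕ
  | [] => []
  | [_] => [1]
  | a :: b :: l =>
    if a = b then
      match rle (b :: l) with
      | [] => [1]
      | c :: r => (c + 1) :: r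
    else 1 :: rle (b :: l)

/-- Erase a leading `1`, if any. -/
def trim1 : List ℕ → List ℕ
  | 1 :: l => l
  | l => l

/-- The derivative `D`: the run-length encoding with the first and/or the last
symbol erased when they are equal to `1`. -/
def D (w : List ℕ) : List ℕ := trim1 ((trim1 (rle w).reverse).reverse)

/-- Words over Σ = {1,2}. -/
def IsWord (w : List ℕ) : Prop := ∀ x ∈ w, x = 1 ∨ x = 2

/-- Words over Σ₀ = {0,1,2}. -/
def IsWord0 (w : List ℕ) : Prop := ∀ x ∈ w, x = 0 ∨ x = 1 ∨ x = 2

/-- Σ₀^{++}: words over Σ₀ that are empty or begin with a nonzero symbol. -/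
def Spp (w : List ℕ) : Prop := IsWord0 w ∧ (w = [] ∨ w.headI ≠ 0)

/-- C^∞-words: every iterated derivative is a word over Σ = {1,2}. -/
def Cinf (w : List ℕ) : Prop := ∀ k, IsWord (D^[k] w)

/-- The height of a C^∞-word: the least k with D^[k] w = ε. -/
noncomputable def height (w : List ℕ) : ℕ := sInf {k | D^[k] w = []}

/-- The root of a C^∞-word of height k > 0: its (k-1)-st derivative. -/
noncomputable def root (w : List ℕ) : List ℕ := D^[height w - 1] w

/-- `v` is a primitive of `w`. -/
def Primitive (v w : List ℕ) : Prop := IsWord v ∧ D v = w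

/-- The complement: swap 1's and 2's. -/
def compl (w : List ℕ) : List ℕ := w.map (fun x => 3 - x)

/-- Minimal C^∞-words: every derivative is a shortest primitive of the next one. -/
def Minimal (w : List ℕ) : Prop :=
  Cinf w ∧ 0 < height w ∧
    ∀ j, j + 2 ≤ height w → ∀ v, Primitive v (D^[j+1] w) → (D^[j] w).length ≤ v.length

/-- Maximal C^∞-words: every derivative is a longest primitive of the next one. -/
def Maximal (w : List ℕ) : Prop :=
  Cinf w ∧ 0 < height w ∧
    ∀ j, j + 2 ≤ height w → ∀ v, Primitive v (D^[j+1] w) → v.length ≤ (D^[j] w).length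

def LeftMinimal (w : List ℕ) : Prop := ∃ v, Minimal v ∧ w <+: v
def RightMinimal (w : List ℕ) : Prop := ∃ v, Minimal v ∧ w <:+ v
def LeftMaximal (w : List ℕ) : Prop := ∃ v, Maximal v ∧ w <+: v
def RightMaximal (w : List ℕ) : Prop := ∃ v, Maximal v ∧ w <:+ v

/-- Single-rooted minimal words. -/
def SRMin (w : List ℕ) : Prop := Minimal w ∧ (root w).length = 1

/-- Double-rooted minimal words. -/
def DRMin (w : List ℕ) : Prop := Minimal w ∧ (root w).length = 2

/-- The left frontier Ψ(w). -/
noncomputable def psi (w : List ℕ) : List ℕ :=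
  (List.range (height w)).map fun i =>
    if i = 0 then w.getD 0 0
    else if (D^[i] w).getD 0 0 = 2 ∧ (D^[i-1] w).getD 0 0 ≠ (D^[i-1] w).getD 1 0
      then 0
    else (D^[i] w).getD 0 0

/-- The single-rooted minimal word with left frontier U (if it exists). -/
noncomputable def srmOf (U : List ℕ) : List ℕ :=
  if h : ∃ w, SRMin w ∧ psi w = U then h.choose else []

/-- The double-rooted minimal word with left frontier U (if it exists). -/
noncomputable def drmOf (U : List ℕ) : List ℕ :=
  if h : ∃ w, DRMin w ∧ psi w = U then h.choose else []

/-- Γs: the right frontier of the single-rooted minimal word with left frontier U. -/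
noncomputable def Gs (U : List ℕ) : List ℕ := psi (srmOf U).reverse

/-- Γd: the right frontier of the double-rooted minimal word with left frontier U. -/
noncomputable def Gd (U : List ℕ) : List ℕ := psi (drmOf U).reverse

/-- Θ = Γs ∘ Γd. -/
noncomputable def Th (U : List ℕ) : List ℕ := Gs (Gd U)

/-- Π = Γd ∘ Γs. -/
noncomputable def Pp (U : List ℕ) : List ℕ := Gd (Gs U)

/-- One step in the graph G: from node U, the edge labeled 1 goes to U·1, the edge
labeled 2 goes to U·2, and the edge labeled 0 goes to Θ(U)·2. -/
noncomputable def step (U : List ℕ) (a : ℕ) : List ℕ :=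
  if a = 1 then U ++ [1] else if a = 2 then U ++ [2] else Th U ++ [2]

/-- The endpoint of the path in G starting at the origin ε and labeled by W. -/
noncomputable def pathEnd (W : List ℕ) : List ℕ := W.foldl step []

/-- W ∈ Σ₀^{++} labels a directed path in G from ε to U. -/
def LabelsPath (W U : List ℕ) : Prop := Spp W ∧ pathEnd W = U

/-- ‖U‖: the number of words in Σ₀^{++} labeling a path in G from ε to U. -/
noncomputable def normG (U : List ℕ) : ℕ := {W | LabelsPath W U}.ncard

/-- |U|: the length of the single-rooted minimal word with left frontier U. -/
noncomputable def len (U : List ℕ) : ℕ := (srmOf U).length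

/-- u is the minimal part of w: the first (leftmost-occurring) factor of w that
is a single-rooted minimal word of the same height as w. -/
def IsMinPart (u w : List ℕ) : Prop :=
  ∃ s t, w = s ++ u ++ t ∧ SRMin u ∧ height u = height w ∧
    ∀ u' s' t', w = s' ++ u' ++ t' → SRMin u' → height u' = height w →
      s.length ≤ s'.length


/-! ### Auxiliary development -/

section Aux

/-- Build a word from a run-length sequence and a starting symbol. -/
def build (a : ℕ) : List ℕ → List ℕ
  | [] => []
  | n :: s => List.replicate n a ++ build (3 - a) s

lemma build_nil (a : ℕ) : build a [] = [] := rfl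

lemma build_cons (a n : ℕ) (s : List ℕ) :
    build a (n :: s) = List.replicate n a ++ build (3 - a) s := rfl

lemma three_sub_ne (a : ℕ) : 3 - a ≠ a := by omega

lemma rle_nil : rle [] = [] := rfl

lemma rle_single (a : ℕ) : rle [a] = [1] := rfl

lemma rle_ne_nil (a : ℕ) (l : List ℕ) : rle (a :: l) ≠ [] := by
  cases l with
  | nil => simp [rle]
  | cons b t =>
    by_cases h : a = b
    · simp only [rle, if_pos h]
      rcases hr : rle (b :: t) with _ | ⟨c, r⟩ <;> simp [hr]
    · simp [rle, h]

lemma rle_cons_cons_eq {a b : ℕ} (l : List ℕ) (h : a = b) :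
    rle (a :: b :: l) = ((rle (b :: l)).headI + 1) :: (rle (b :: l)).tail := by
  rcases hr : rle (b :: l) with _ | ⟨c, r⟩
  · exact absurd hr (rle_ne_nil _ _)
  · simp [rle, h, hr]

lemma rle_cons_cons_ne {a b : ℕ} (l : List ℕ) (h : a ≠ b) :
    rle (a :: b :: l) = 1 :: rle (b :: l) := by
  simp [rle, h]

lemma rle_eq_nil_iff {v : List ℕ} : rle v = [] ↔ v = [] := by
  constructor
  · intro h
    cases v with
    | nil => rfl
    | cons a l => exact absurd h (rle_ne_nil _ _)
  · rintro rfl; rfl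

lemma rle_sum (v : List ℕ) : (rle v).sum = v.length := by
  induction v with
  | nil => rfl
  | cons a l ih =>
    cases l with
    | nil => simp [rle]
    | cons b t =>
      by_cases h : a = b
      · cases hr : rle (b :: t) with
        | nil => exact absurd hr (rle_ne_nil _ _)
        | cons c r =>
          rw [hr] at ih
          rw [rle_cons_cons_eq _ h, hr]
          simp at ih ⊢; omega
      · rw [rle_cons_cons_ne _ h]; simp at ih ⊢; omega

lemma rle_pos (v : List ℕ) : ∀ n ∈ rle v, 1 ≤ n := by
  induction v with
  | nil => simp [rle]
  | cons a l ih =>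
    cases l with
    | nil => simp [rle]
    | cons b t =>
      by_cases h : a = b
      · cases hr : rle (b :: t) with
        | nil => exact absurd hr (rle_ne_nil _ _)
        | cons c r =>
          rw [rle_cons_cons_eq _ h, hr]
          simp only [List.headI, List.tail_cons]
          intro n hn
          rcases List.mem_cons.mp hn with h1 | h1
          · omega
          · exact ih n (by rw [hr]; exact List.mem_cons_of_mem _ h1)
      · rw [rle_cons_cons_ne _ h]
        intro n hn
        rcases List.mem_cons.mp hn with h1 | h1
        · omega
        · exact ih n h1

lemma build_length (a : ℕ) (s : List ℕ) : (build a s).length = s.sum := by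
  induction s generalizing a with
  | nil => rfl
  | cons n s ih => simp [build_cons, ih]

lemma build_isWord {a : ℕ} (ha : a = 1 ∨ a = 2) (s : List ℕ) : IsWord (build a s) := by
  induction s generalizing a with
  | nil => intro x hx; simp [build_nil] at hx
  | cons n s ih =>
    intro x hx
    rw [build_cons, List.mem_append] at hx
    rcases hx with hx | hx
    · rw [List.eq_of_mem_replicate hx]; exact ha
    · exact ih (by omega) x hx

lemma build_ne_nil {a n : ℕ} (hn : 1 ≤ n) (s : List ℕ) : build a (n :: s) ≠ [] := by
  rw [build_cons]
  intro h
  rcases List.append_eq_nil_iff.mp h with ⟨h1, _⟩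
  simp [List.replicate_eq_nil_iff] at h1
  omega

lemma build_headI {a n : ℕ} (hn : 1 ≤ n) (s : List ℕ) : (build a (n :: s)).headI = a := by
  rw [build_cons]
  obtain ⟨m, rfl⟩ : ∃ m, n = m + 1 := ⟨n - 1, by omega⟩
  simp [List.replicate_succ]

end Aux

section Aux2

lemma rle_replicate (a n : ℕ) : rle (List.replicate (n + 1) a) = [n + 1] := by
  induction n with
  | zero => simp [rle]
  | succ m ih =>
    have : List.replicate (m + 2) a = a :: a :: List.replicate m a := by
      simp [List.replicate_succ]
    rw [this]
    have h2 : a :: List.replicate m a = List.replicate (m + 1) a := by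
      simp [List.replicate_succ]
    rw [rle_cons_cons_eq _ rfl, h2, ih]
    simp

lemma rle_replicate_append {a : ℕ} (n : ℕ) {w : List ℕ} (hw : w ≠ []) (hh : w.headI ≠ a) :
    rle (List.replicate (n + 1) a ++ w) = (n + 1) :: rle w := by
  induction n with
  | zero =>
    cases w with
    | nil => exact absurd rfl hw
    | cons b t =>
      simp only [List.headI] at hh
      simp only [List.replicate_succ, List.replicate_zero, List.nil_append,
        List.cons_append]
      rw [rle_cons_cons_ne _ (fun h => hh h.symm)]
  | succ m ih =>
    have : List.replicate (m + 2) a ++ w = a :: (List.replicate (m + 1) a ++ w) := by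
      simp [List.replicate_succ]
    rw [this]
    have h2 : List.replicate (m + 1) a ++ w = a :: (List.replicate m a ++ w) := by
      simp [List.replicate_succ]
    rw [h2, rle_cons_cons_eq _ rfl, ← h2, ih]
    simp

lemma rle_build {s : List ℕ} (hs : ∀ n ∈ s, 1 ≤ n) (a : ℕ) : rle (build a s) = s := by
  induction s generalizing a with
  | nil => rfl
  | cons n s ih =>
    have hn1 : 1 ≤ n := hs n List.mem_cons_self
    obtain ⟨m, rfl⟩ : ∃ m, n = m + 1 := ⟨n - 1, by omega⟩
    rw [build_cons]
    cases s with
    | nil => simpa [build_nil] using rle_replicate a m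
    | cons n' s' =>
      have hn2 : 1 ≤ n' := hs n' (List.mem_cons_of_mem _ List.mem_cons_self)
      obtain ⟨m', rfl⟩ : ∃ m', n' = m' + 1 := ⟨n' - 1, by omega⟩
      have hne : build (3 - a) ((m' + 1) :: s') ≠ [] := build_ne_nil (by omega) _
      have hhd : (build (3 - a) ((m' + 1) :: s')).headI ≠ a := by
        rw [build_headI (by omega)]; exact three_sub_ne a
      rw [rle_replicate_append m hne hhd, ih (fun x hx => hs x (List.mem_cons_of_mem _ hx))]

lemma build_rle {v : List ℕ} (hv : IsWord v) : build v.headI (rle v) = v := by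
  induction v with
  | nil => rfl
  | cons a l ih =>
    have hl : IsWord l := fun x hx => hv x (List.mem_cons_of_mem _ hx)
    cases l with
    | nil => simp [rle, build_cons, build_nil]
    | cons b t =>
      by_cases h : a = b
      · subst h
        cases hr : rle (a :: t) with
        | nil => exact absurd hr (rle_ne_nil _ _)
        | cons c r =>
          rw [rle_cons_cons_eq _ rfl, hr]
          simp only [List.headI, List.tail_cons]
          have ihv : build a (c :: r) = a :: t := by
            have := ih hl; rwa [hr] at this
          calc build a ((c + 1) :: r)
              = a :: build a (c :: r) := by
                simp [build_cons, List.replicate_succ]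
          _ = a :: a :: t := by rw [ihv]
      · have hb : b = 3 - a := by
          rcases hv a (by simp) with rfl | rfl <;>
            rcases hv b (by simp) with rfl | rfl <;> omega
        rw [rle_cons_cons_ne _ h]
        simp only [List.headI]
        have ihv : build b (rle (b :: t)) = b :: t := ih hl
        rw [build_cons]
        simp only [List.replicate_one]
        rw [← hb, ihv]
        simp

lemma word_eq_of_rle_eq {v w : List ℕ} (hv : IsWord v) (hw : IsWord w)
    (h1 : rle v = rle w) (h2 : v.headI = w.headI) : v = w := by
  rw [← build_rle hv, ← build_rle hw, h1, h2]

/-! ### trim1 and dtrim -/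

lemma trim1_one_cons (l : List ℕ) : trim1 (1 :: l) = l := rfl

lemma trim1_cons_ne {x : ℕ} (h : x ≠ 1) (l : List ℕ) : trim1 (x :: l) = x :: l := by
  match x, h with
  | 0, _ => rfl
  | (n+2), _ => rfl

lemma trim1_cases (t : List ℕ) :
    (t ≠ [] ∧ t.headI = 1 ∧ trim1 t = t.tail) ∨ (t.headI ≠ 1 ∧ trim1 t = t) := by
  cases t with
  | nil => right; exact ⟨by simp, rfl⟩
  | cons x l =>
    by_cases h : x = 1
    · subst h; left; exact ⟨by simp, rfl, rfl⟩
    · right; exact ⟨h, trim1_cons_ne h l⟩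

/-- Strip a trailing 1. -/
def rstrip (s : List ℕ) : List ℕ := (trim1 s.reverse).reverse

lemma dtrim_def (w : List ℕ) : D w = trim1 (rstrip (rle w)) := rfl

def dtrim (s : List ℕ) : List ℕ := trim1 (rstrip s)

lemma D_eq_dtrim (w : List ℕ) : D w = dtrim (rle w) := rfl

lemma rstrip_nil : rstrip [] = [] := rfl

lemma rstrip_append_one (s : List ℕ) : rstrip (s ++ [1]) = s := by
  simp [rstrip, trim1_one_cons]

lemma rstrip_append_ne {x : ℕ} (h : x ≠ 1) (s : List ℕ) : rstrip (s ++ [x]) = s ++ [x] := by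
  simp [rstrip, trim1_cons_ne h]

lemma rstrip_cases (s : List ℕ) :
    (s ≠ [] ∧ s.getLast? = some 1 ∧ s = rstrip s ++ [1]) ∨
    (s.getLast? ≠ some 1 ∧ rstrip s = s) := by
  induction s using List.reverseRecOn with
  | nil => right; exact ⟨by simp, rfl⟩
  | append_singleton t x _ =>
    by_cases h : x = 1
    · subst h; left
      refine ⟨by simp, by simp, by rw [rstrip_append_one]⟩
    · right
      refine ⟨by simp [h], rstrip_append_ne h t⟩

end Aux2

section Aux3

lemma getLast?_cons_of_ne_nil {a : ℕ} {u : List ℕ} (hu : u ≠ []) :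
    (a :: u).getLast? = u.getLast? := by
  cases u with
  | nil => exact absurd rfl hu
  | cons b t => rw [List.getLast?_cons_cons]

/-- Characterization of `dtrim s = u` for nonempty `u`. -/
lemma dtrim_eq_cases {s u : List ℕ} (hu : u ≠ []) (h : dtrim s = u) :
    (s = u ∧ u.headI ≠ 1 ∧ u.getLast? ≠ some 1) ∨
    (s = 1 :: u ∧ u.getLast? ≠ some 1) ∨
    (s = u ++ [1] ∧ u.headI ≠ 1) ∨
    (s = 1 :: u ++ [1]) := by
  unfold dtrim at h
  rcases trim1_cases (rstrip s) with ⟨hne, h1, h2⟩ | ⟨h1, h2⟩ <;>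
    rcases rstrip_cases s with ⟨_, g1, g2⟩ | ⟨g1, g2⟩
  · -- rstrip s = 1 :: u, s = rstrip s ++ [1]
    have hs : rstrip s = 1 :: u := by
      cases he : rstrip s with
      | nil => exact absurd he hne
      | cons x l =>
        rw [he] at h1 h2 h
        simp only [List.headI] at h1
        simp only [List.tail_cons] at h2
        rw [h1, h2.symm.trans h]
    right; right; right
    rw [g2, hs]
  · have hs : rstrip s = 1 :: u := by
      cases he : rstrip s with
      | nil => exact absurd he hne
      | cons x l =>
        rw [he] at h1 h2 h
        simp only [List.headI] at h1
        simp only [List.tail_cons] at h2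
        rw [h1, h2.symm.trans h]
    right; left
    constructor
    · rw [← g2, hs]
    · rw [← g2] at g1
      rw [hs] at g1
      rwa [getLast?_cons_of_ne_nil hu] at g1
  · -- rstrip s = u (headI ≠ 1), s = rstrip s ++ [1]
    right; right; left
    have h2' : u = rstrip s := by rw [← h, h2]
    exact ⟨by rw [g2, ← h2'], by rw [h2']; exact h1⟩
  · left
    have h2' : u = rstrip s := by rw [← h, h2]
    refine ⟨by rw [← g2, ← h2'], by rw [h2']; exact h1, ?_⟩
    rw [← g2, ← h2'] at g1
    exact g1

lemma dtrim_self {u : List ℕ} (h1 : u.headI ≠ 1) (h2 : u.getLast? ≠ some 1) :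
    dtrim u = u := by
  unfold dtrim
  rcases rstrip_cases u with ⟨_, g1, _⟩ | ⟨_, g2⟩
  · exact absurd g1 h2
  · rw [g2]
    rcases trim1_cases u with ⟨_, t1, _⟩ | ⟨_, t2⟩
    · exact absurd t1 h1
    · exact t2

lemma dtrim_one_cons {u : List ℕ} (hu : u ≠ []) (h2 : u.getLast? ≠ some 1) :
    dtrim (1 :: u) = u := by
  unfold dtrim
  rcases rstrip_cases (1 :: u) with ⟨_, g1, _⟩ | ⟨_, g2⟩
  · rw [getLast?_cons_of_ne_nil hu] at g1
    exact absurd g1 h2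
  · rw [g2, trim1_one_cons]

lemma dtrim_append_one {u : List ℕ} (h1 : u.headI ≠ 1) :
    dtrim (u ++ [1]) = u := by
  unfold dtrim
  rw [rstrip_append_one]
  rcases trim1_cases u with ⟨_, t1, _⟩ | ⟨_, t2⟩
  · exact absurd t1 h1
  · exact t2

lemma dtrim_one_cons_append_one (u : List ℕ) :
    dtrim (1 :: u ++ [1]) = u := by
  unfold dtrim
  have : (1 :: u) ++ [1] = 1 :: (u ++ [1]) := rfl
  rw [show (1 : ℕ) :: u ++ [1] = (1 :: u) ++ [1] from rfl, rstrip_append_one,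
    trim1_one_cons]

/-- The run-length sequence of the minimal primitive of `u`. -/
def minrle (u : List ℕ) : List ℕ :=
  (if u.headI = 1 then [1] else []) ++ u ++ (if u.getLast? = some 1 then [1] else [])

lemma dtrim_minrle {u : List ℕ} (hu : u ≠ []) : dtrim (minrle u) = u := by
  unfold minrle
  by_cases h1 : u.headI = 1 <;> by_cases h2 : u.getLast? = some 1
  · rw [if_pos h1, if_pos h2]
    simpa [List.append_assoc] using dtrim_one_cons_append_one u
  · rw [if_pos h1, if_neg h2]
    simpa using dtrim_one_cons hu h2
  · rw [if_neg h1, if_pos h2]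
    simpa [List.append_assoc] using dtrim_append_one h1
  · rw [if_neg h1, if_neg h2]
    simpa using dtrim_self h1 h2

lemma minrle_sum (u : List ℕ) :
    (minrle u).sum = u.sum + (if u.headI = 1 then 1 else 0)
      + (if u.getLast? = some 1 then 1 else 0) := by
  unfold minrle
  by_cases h1 : u.headI = 1 <;> by_cases h2 : u.getLast? = some 1 <;>
    simp [h1, h2] <;> omega

lemma minrle_pos {u : List ℕ} (hu : IsWord u) : ∀ n ∈ minrle u, 1 ≤ n := by
  intro n hn
  unfold minrle at hn
  simp only [List.mem_append] at hn
  rcases hn with (hn | hn) | hn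
  · split at hn <;> simp at hn; omega
  · rcases hu n hn with rfl | rfl <;> omega
  · split at hn <;> simp at hn; omega

lemma headI_eq_getD (l : List ℕ) : l.getD 0 0 = l.headI := by
  cases l <;> rfl

lemma minrle_cons {u : List ℕ} (hu : u ≠ []) :
    ∃ s, minrle u = (if u.headI = 1 then 1 else u.headI) :: s := by
  unfold minrle
  by_cases h1 : u.headI = 1
  · exact ⟨u ++ if u.getLast? = some 1 then [1] else [], by simp [h1]⟩
  · refine ⟨u.tail ++ if u.getLast? = some 1 then [1] else [], ?_⟩
    rw [if_neg h1, if_neg h1, List.nil_append]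
    cases u with
    | nil => exact absurd rfl hu
    | cons a t => simp

/-- The minimal primitive of `u` starting with letter `a`. -/
def P (a : ℕ) (u : List ℕ) : List ℕ := build a (minrle u)

lemma P_isWord {a : ℕ} (ha : a = 1 ∨ a = 2) (u : List ℕ) : IsWord (P a u) :=
  build_isWord ha _

lemma rle_P {u : List ℕ} (hu : IsWord u) (a : ℕ) : rle (P a u) = minrle u :=
  rle_build (minrle_pos hu) a

lemma D_P {u : List ℕ} (hu : IsWord u) (hne : u ≠ []) (a : ℕ) : D (P a u) = u := by
  rw [D_eq_dtrim, rle_P hu, dtrim_minrle hne]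

lemma P_length (a : ℕ) (u : List ℕ) : (P a u).length = (minrle u).sum :=
  build_length _ _

lemma P_length' (a b : ℕ) (u : List ℕ) : (P a u).length = (P b u).length := by
  rw [P_length, P_length]

lemma P_ne_nil {u : List ℕ} (hu : IsWord u) (hne : u ≠ []) (a : ℕ) : P a u ≠ [] := by
  intro h
  have := rle_P hu a
  rw [h, rle_nil] at this
  obtain ⟨s, hs⟩ := minrle_cons hne
  rw [hs] at this
  cases this

lemma P_headI {u : List ℕ} (hu : IsWord u) (hne : u ≠ []) (a : ℕ) : (P a u).headI = a := by
  obtain ⟨s, hs⟩ := minrle_cons hne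
  have hpos : 1 ≤ (if u.headI = 1 then 1 else u.headI) := by
    split
    · omega
    · cases u with
      | nil => exact absurd rfl hne
      | cons x t =>
        rcases hu x (by simp) with rfl | rfl <;> simp
  unfold P
  rw [hs]
  exact build_headI hpos _

lemma P_head2 {u : List ℕ} (hu : u.headI = 2) (hne : u ≠ []) (a : ℕ) :
    ∃ t, P a u = a :: a :: t := by
  obtain ⟨s, hs⟩ := minrle_cons hne
  rw [hu] at hs
  simp only [if_neg (by norm_num : (2:ℕ) ≠ 1)] at hs
  unfold P
  rw [hs, build_cons]
  exact ⟨build (3 - a) s, by simp [List.replicate_succ]⟩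

lemma Primitive_P {u : List ℕ} (hu : IsWord u) (hne : u ≠ []) {a : ℕ} (ha : a = 1 ∨ a = 2) :
    Primitive (P a u) u :=
  ⟨P_isWord ha u, D_P hu hne a⟩

end Aux3

section Aux4

lemma P_min {u v : List ℕ} (hne : u ≠ []) (hp : Primitive v u) (a : ℕ) :
    (P a u).length ≤ v.length := by
  obtain ⟨hv, hD⟩ := hp
  rw [D_eq_dtrim] at hD
  have hsum : (rle v).sum = v.length := rle_sum v
  rw [P_length, minrle_sum, ← hsum]
  rcases dtrim_eq_cases hne hD with ⟨hs, h1, h2⟩ | ⟨hs, h2⟩ | ⟨hs, h1⟩ | hs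
  · rw [hs, if_neg h1, if_neg h2]; omega
  · rw [hs, if_neg h2, List.sum_cons]
    split_ifs <;> omega
  · rw [hs, if_neg h1, List.sum_append]
    split_ifs <;> simp <;> omega
  · rw [hs]
    split_ifs <;> simp [List.sum_append] <;> omega

lemma rle_eq_minrle' {u v : List ℕ} {a : ℕ} (hne : u ≠ []) (hp : Primitive v u)
    (hlen : v.length = (P a u).length) : rle v = minrle u := by
  obtain ⟨hv, hD⟩ := hp
  rw [D_eq_dtrim] at hD
  have hsum : (rle v).sum = v.length := rle_sum v
  rw [P_length, minrle_sum] at hlen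
  unfold minrle
  rcases dtrim_eq_cases hne hD with ⟨hs, h1, h2⟩ | ⟨hs, h2⟩ | ⟨hs, h1⟩ | hs
  · rw [hs, if_neg h1, if_neg h2]; simp
  · rw [hs] at hsum
    have h1 : u.headI = 1 := by
      by_contra h1
      rw [if_neg h1, if_neg h2] at hlen
      rw [List.sum_cons] at hsum
      omega
    rw [hs, if_pos h1, if_neg h2]; simp
  · rw [hs] at hsum
    have h2 : u.getLast? = some 1 := by
      by_contra h2
      rw [if_neg h1, if_neg h2] at hlen
      rw [List.sum_append] at hsum
      simp at hsum
      omega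
    rw [hs, if_neg h1, if_pos h2]; simp
  · rw [hs] at hsum
    rw [List.sum_append, List.sum_cons] at hsum
    simp only [List.sum_cons, List.sum_nil] at hsum
    have h1 : u.headI = 1 := by
      by_contra h1
      rw [if_neg h1] at hlen
      split_ifs at hlen <;> omega
    have h2 : u.getLast? = some 1 := by
      by_contra h2
      rw [if_neg h2] at hlen
      split_ifs at hlen <;> omega
    rw [hs, if_pos h1, if_pos h2]; simp

lemma P_unique {u v : List ℕ} (hne : u ≠ []) (hp : Primitive v u)
    (hlen : v.length = (P v.headI u).length) : v = P v.headI u := by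
  have h := rle_eq_minrle' (a := v.headI) hne hp hlen
  conv_lhs => rw [← build_rle hp.1]
  rw [h]
  rfl

/-! ### Iterates of D and height -/

lemma D_nil : D [] = [] := rfl

lemma iterate_D_nil (n : ℕ) : D^[n] ([] : List ℕ) = [] := by
  induction n with
  | zero => rfl
  | succ m ih => rw [Function.iterate_succ_apply', ih, D_nil]

lemma iterate_D_empty_mono {w : List ℕ} {i j : ℕ} (h : D^[i] w = []) (hij : i ≤ j) :
    D^[j] w = [] := by
  obtain ⟨d, rfl⟩ := Nat.exists_eq_add_of_le hij
  rw [Nat.add_comm, Function.iterate_add_apply, h, iterate_D_nil]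

lemma height_eq_of {w : List ℕ} {n : ℕ} (h1 : D^[n] w = []) (h2 : ∀ m < n, D^[m] w ≠ []) :
    height w = n := by
  have hmem : n ∈ {k | D^[k] w = []} := h1
  have hle : height w ≤ n := Nat.sInf_le hmem
  rcases Nat.lt_or_ge (height w) n with hlt | hge
  · exfalso
    have hne : {k | D^[k] w = []}.Nonempty := ⟨n, hmem⟩
    have := Nat.sInf_mem hne
    exact h2 _ hlt this
  · omega

lemma height_spec {w : List ℕ} (h : 0 < height w) :
    D^[height w] w = [] ∧ ∀ m < height w, D^[m] w ≠ [] := by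
  have hne : {k | D^[k] w = []}.Nonempty := by
    by_contra hc
    rw [Set.not_nonempty_iff_eq_empty] at hc
    rw [height, hc] at h
    simp at h
  exact ⟨Nat.sInf_mem hne, fun m hm hmem => Nat.notMem_of_lt_sInf hm hmem⟩

lemma ne_nil_of_height_pos {w : List ℕ} (h : 0 < height w) : w ≠ [] := by
  intro hw
  have := (height_spec h).2 0 h
  exact this hw

end Aux4

section Aux5

/-- A good family of base (height-one) words indexed by their first letter. -/
structure GoodBase (base : ℕ → List ℕ) : Prop where
  isWord : ∀ a, a = 1 ∨ a = 2 → IsWord (base a)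
  headI : ∀ a, (base a).headI = a
  ne_nil : ∀ a, base a ≠ []
  d_nil : ∀ a, D (base a) = []

/-- The minimal word with given left frontier, built on a family of base words. -/
def bld (base : ℕ → List ℕ) : List ℕ → List ℕ
  | [] => []
  | [a] => base a
  | a :: b :: V => P a (bld base (b :: V))

variable {base : ℕ → List ℕ}

lemma bld_cons {a : ℕ} {V : List ℕ} (hV : V ≠ []) :
    bld base (a :: V) = P a (bld base V) := by
  cases V with
  | nil => exact absurd rfl hV
  | cons b t => rfl

lemma isWord_tail {a : ℕ} {l : List ℕ} (h : IsWord (a :: l)) : IsWord l :=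
  fun x hx => h x (List.mem_cons_of_mem _ hx)

lemma bld_isWord (hb : GoodBase base) : ∀ {U : List ℕ}, IsWord U → IsWord (bld base U)
  | [], _ => by intro x hx; simp [bld] at hx
  | [a], hU => hb.isWord a (hU a (by simp))
  | a :: b :: V, hU =>
    P_isWord (hU a (by simp)) _

lemma bld_ne_nil (hb : GoodBase base) :
    ∀ {U : List ℕ}, IsWord U → U ≠ [] → bld base U ≠ []
  | [], _, h => absurd rfl h
  | [a], _, _ => hb.ne_nil a
  | a :: b :: V, hU, _ => by
    rw [bld_cons (by simp)]
    exact P_ne_nil (bld_isWord hb (isWord_tail hU)) (bld_ne_nil hb (isWord_tail hU) (by simp)) a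

lemma bld_headI (hb : GoodBase base) :
    ∀ {U : List ℕ}, IsWord U → U ≠ [] → (bld base U).headI = U.headI
  | [], _, h => absurd rfl h
  | [a], _, _ => hb.headI a
  | a :: b :: V, hU, _ => by
    rw [bld_cons (by simp)]
    exact P_headI (bld_isWord hb (isWord_tail hU)) (bld_ne_nil hb (isWord_tail hU) (by simp)) a

lemma bld_D (hb : GoodBase base) :
    ∀ {U : List ℕ}, IsWord U → D (bld base U) = bld base U.tail
  | [], _ => D_nil
  | [a], _ => hb.d_nil a
  | a :: b :: V, hU => by
    rw [bld_cons (by simp)]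
    exact D_P (bld_isWord hb (isWord_tail hU)) (bld_ne_nil hb (isWord_tail hU) (by simp)) a

lemma isWord_drop {U : List ℕ} (hU : IsWord U) (i : ℕ) : IsWord (U.drop i) :=
  fun x hx => hU x (List.mem_of_mem_drop hx)

lemma bld_iterate (hb : GoodBase base) {U : List ℕ} (hU : IsWord U) (i : ℕ) :
    D^[i] (bld base U) = bld base (U.drop i) := by
  induction i with
  | zero => rfl
  | succ m ih =>
    rw [Function.iterate_succ_apply', ih, bld_D hb (isWord_drop hU m), List.tail_drop]

lemma bld_height (hb : GoodBase base) {U : List ℕ} (hU : IsWord U) (hne : U ≠ []) :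
    height (bld base U) = U.length := by
  apply height_eq_of
  · rw [bld_iterate hb hU, List.drop_length]
    rfl
  · intro m hm
    rw [bld_iterate hb hU]
    refine bld_ne_nil hb (isWord_drop hU m) ?_
    intro h
    have := congrArg List.length h
    simp at this
    omega

lemma bld_cinf (hb : GoodBase base) {U : List ℕ} (hU : IsWord U) : Cinf (bld base U) := by
  intro i
  rw [bld_iterate hb hU]
  exact bld_isWord hb (isWord_drop hU i)

lemma drop_cons_of_lt {U : List ℕ} {j : ℕ} (h : j + 1 ≤ U.length) :
    U.drop j = U[j]'(by omega) :: U.drop (j + 1) := List.drop_eq_getElem_cons (by omega)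

lemma bld_minimal (hb : GoodBase base) {U : List ℕ} (hU : IsWord U) (hne : U ≠ []) :
    Minimal (bld base U) := by
  refine ⟨bld_cinf hb hU, ?_, ?_⟩
  · rw [bld_height hb hU hne]
    cases U with
    | nil => exact absurd rfl hne
    | cons a t => simp
  · intro j hj v hv
    rw [bld_height hb hU hne] at hj
    rw [bld_iterate hb hU] at hv ⊢
    have hd : U.drop j = U[j]'(by omega) :: U.drop (j + 1) := drop_cons_of_lt (by omega)
    have hdne : U.drop (j + 1) ≠ [] := by
      intro h; rw [← List.length_eq_zero_iff] at h; rw [List.length_drop] at h; omega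
    rw [hd, bld_cons hdne]
    rw [P_length]
    calc (minrle (bld base (U.drop (j + 1)))).sum
        = (P v.headI (bld base (U.drop (j + 1)))).length := (P_length _ _).symm
      _ ≤ v.length := P_min (bld_ne_nil hb (isWord_drop hU _) hdne) hv _

end Aux5

section Aux6

variable {base : ℕ → List ℕ}

lemma psi_length (w : List ℕ) : (psi w).length = height w := by simp [psi]

lemma psi_getElem (w : List ℕ) (i : ℕ) (h : i < (psi w).length) :
    (psi w)[i] =
      if i = 0 then w.getD 0 0
      else if (D^[i] w).getD 0 0 = 2 ∧ (D^[i-1] w).getD 0 0 ≠ (D^[i-1] w).getD 1 0 then 0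
      else (D^[i] w).getD 0 0 := by
  simp [psi]

lemma headI_getElem {l : List ℕ} (h : 0 < l.length) : l.headI = l[0] := by
  cases l with
  | nil => simp at h
  | cons a t => rfl

lemma headI_word {l : List ℕ} (hw : IsWord l) (hne : l ≠ []) :
    l.headI = 1 ∨ l.headI = 2 := by
  cases l with
  | nil => exact absurd rfl hne
  | cons a t => exact hw a (by simp)

lemma drop_headI {U : List ℕ} {i : ℕ} (h : i < U.length) :
    (U.drop i).headI = U[i] := by
  rw [List.drop_eq_getElem_cons h]
  rfl

lemma drop_ne_nil {U : List ℕ} {i : ℕ} (h : i < U.length) : U.drop i ≠ [] := by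
  intro hc
  have := congrArg List.length hc
  simp at this
  omega

lemma bld_psi (hb : GoodBase base) {U : List ℕ} (hU : IsWord U) (hne : U ≠ []) :
    psi (bld base U) = U := by
  have hh : height (bld base U) = U.length := bld_height hb hU hne
  apply List.ext_getElem
  · rw [psi_length, hh]
  intro i h1 h2
  rw [psi_getElem _ i h1]
  by_cases hi0 : i = 0
  · subst hi0
    rw [if_pos rfl, headI_eq_getD, bld_headI hb hU hne, headI_getElem h2]
  · obtain ⟨j, rfl⟩ : ∃ j, i = j + 1 := ⟨i - 1, by omega⟩
    rw [if_neg hi0]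
    simp only [Nat.add_sub_cancel]
    set i := j + 1 with hi_def
    have hiU : i < U.length := h2
    have hUi : (D^[i] (bld base U)).getD 0 0 = U[i] := by
      rw [bld_iterate hb hU, headI_eq_getD,
        bld_headI hb (isWord_drop hU i) (drop_ne_nil hiU), drop_headI hiU]
    by_cases h2v : U[i] = 2
    · have hd : U.drop j = U[j]'(by omega) :: U.drop i := by
        rw [List.drop_eq_getElem_cons (by omega : j < U.length)]
      have hbh : (bld base (U.drop i)).headI = 2 := by
        rw [bld_headI hb (isWord_drop hU i) (drop_ne_nil hiU), drop_headI hiU, h2v]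
      obtain ⟨t, ht⟩ :=
        P_head2 hbh (bld_ne_nil hb (isWord_drop hU i) (drop_ne_nil hiU)) (U[j]'(by omega))
      have hDi : D^[j] (bld base U) = U[j]'(by omega) :: U[j]'(by omega) :: t := by
        rw [bld_iterate hb hU, hd, bld_cons (drop_ne_nil hiU), ht]
      rw [if_neg]
      · exact hUi
      · rintro ⟨-, hcne⟩
        rw [hDi] at hcne
        exact hcne rfl
    · rw [if_neg]
      · exact hUi
      · rintro ⟨hc2, -⟩
        rw [hUi] at hc2
        exact h2v hc2

lemma bld_root (hb : GoodBase base) {U : List ℕ} (hU : IsWord U) (hne : U ≠ []) :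
    ∃ a, (a = 1 ∨ a = 2) ∧ root (bld base U) = base a := by
  have hpos : 0 < U.length := List.length_pos_iff.mpr hne
  unfold root
  rw [bld_height hb hU hne, bld_iterate hb hU]
  have hd : U.drop (U.length - 1) = [U[U.length - 1]'(by omega)] := by
    rw [List.drop_eq_getElem_cons (by omega : U.length - 1 < U.length)]
    congr 1
    apply List.drop_eq_nil_of_le
    omega
  refine ⟨U[U.length - 1]'(by omega), hU _ (List.getElem_mem _), ?_⟩
  rw [hd]
  rfl

end Aux6

section Aux7

variable {base : ℕ → List ℕ}

lemma minimal_step {w : List ℕ} (hm : Minimal w) {i : ℕ} (h1 : 1 ≤ i) (h2 : i < height w) :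
    D^[i-1] w = P ((D^[i-1] w).headI) (D^[i] w) := by
  obtain ⟨hc, hp, hmin⟩ := hm
  have hspec := height_spec hp
  have hune : D^[i] w ≠ [] := hspec.2 i h2
  have huw : IsWord (D^[i] w) := hc i
  have hvw : IsWord (D^[i-1] w) := hc (i-1)
  have hi1 : i - 1 + 1 = i := by omega
  have hD : D (D^[i-1] w) = D^[i] w := by
    have h := Function.iterate_succ_apply' D (i-1) w
    rw [Nat.succ_eq_add_one, hi1] at h
    exact h.symm
  have hprim : Primitive (D^[i-1] w) (D^[i] w) := ⟨hvw, hD⟩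
  have hvne : D^[i-1] w ≠ [] := hspec.2 (i-1) (by omega)
  have ha : (D^[i-1] w).headI = 1 ∨ (D^[i-1] w).headI = 2 := headI_word hvw hvne
  have hle1 : (D^[i-1] w).length ≤ (P ((D^[i-1] w).headI) (D^[i] w)).length := by
    have hmin' := hmin (i-1) (by omega)
    rw [hi1] at hmin'
    exact hmin' _ (Primitive_P huw hune ha)
  have hle2 := P_min hune hprim ((D^[i-1] w).headI)
  exact P_unique hune hprim (le_antisymm hle1 hle2)

lemma psi_no_zero {w : List ℕ} (hm : Minimal w) : 0 ∉ psi w := by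
  intro h0
  obtain ⟨i, hi, hval⟩ := List.mem_iff_getElem.mp h0
  rw [psi_getElem w i hi] at hval
  have hspec := height_spec hm.2.1
  have hih : i < height w := by rw [← psi_length w]; exact hi
  by_cases hi0 : i = 0
  · subst hi0
    rw [if_pos rfl, headI_eq_getD] at hval
    rcases headI_word (hm.1 0) (hspec.2 0 hm.2.1) with h | h <;>
      simp only [Function.iterate_zero_apply] at h <;> omega
  · rw [if_neg hi0] at hval
    split_ifs at hval with hc
    · obtain ⟨hc2, hcne⟩ := hc
      have hstep := minimal_step hm (by omega : 1 ≤ i) hih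
      have hh2 : (D^[i] w).headI = 2 := by rw [← headI_eq_getD]; exact hc2
      obtain ⟨t, ht⟩ := P_head2 hh2 (hspec.2 i hih) ((D^[i-1] w).headI)
      rw [hstep, ht] at hcne
      exact hcne rfl
    · rcases headI_word (hm.1 i) (hspec.2 i hih) with h | h <;>
        rw [headI_eq_getD] at hval <;> omega

lemma minimal_D {w : List ℕ} (hm : Minimal w) (h2 : 2 ≤ height w) : Minimal (D w) := by
  have hspec := height_spec hm.2.1
  have hiter : ∀ n, D^[n] (D w) = D^[n+1] w := fun n =>
    (Function.iterate_succ_apply D n w).symm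
  have hh : height (D w) = height w - 1 := by
    apply height_eq_of
    · rw [hiter]
      have : height w - 1 + 1 = height w := by omega
      rw [this]
      exact hspec.1
    · intro m hm'
      rw [hiter]
      exact hspec.2 (m+1) (by omega)
  refine ⟨fun n => by rw [hiter]; exact hm.1 (n+1), by omega, ?_⟩
  intro j hj v hv
  rw [hh] at hj
  rw [hiter] at hv ⊢
  exact hm.2.2 (j+1) (by omega) v hv

lemma root_D {w : List ℕ} (hm : Minimal w) (h2 : 2 ≤ height w) : root (D w) = root w := by
  have hiter : ∀ n, D^[n] (D w) = D^[n+1] w := fun n =>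
    (Function.iterate_succ_apply D n w).symm
  have hh : height (D w) = height w - 1 := by
    have := (minimal_D hm h2).2.1
    -- recompute as in minimal_D
    apply height_eq_of
    · rw [hiter]
      have h3 : height w - 1 + 1 = height w := by omega
      rw [h3]
      exact (height_spec hm.2.1).1
    · intro m hm'
      rw [hiter]
      exact (height_spec hm.2.1).2 (m+1) (by omega)
  unfold root
  rw [hh, hiter]
  congr 1
  omega

lemma psi_D {w U : List ℕ} (hm : Minimal w) (h2 : 2 ≤ height w)
    (hU : IsWord U) (hpsi : psi w = U) : psi (D w) = U.tail := by
  have hiter : ∀ n, D^[n] (D w) = D^[n+1] w := fun n =>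
    (Function.iterate_succ_apply D n w).symm
  have hh : height (D w) = height w - 1 := by
    apply height_eq_of
    · rw [hiter]
      have h3 : height w - 1 + 1 = height w := by omega
      rw [h3]
      exact (height_spec hm.2.1).1
    · intro m hm'
      rw [hiter]
      exact (height_spec hm.2.1).2 (m+1) (by omega)
  have hlenU : U.length = height w := by rw [← hpsi, psi_length]
  apply List.ext_getElem
  · rw [psi_length, hh, List.length_tail, hlenU]
  intro i hi1 hi2
  have hiW : i + 1 < (psi w).length := by
    rw [psi_length]
    rw [psi_length, hh] at hi1
    omega
  have hwval : (psi w)[i+1] = U[i+1]'(by rw [List.length_tail] at hi2; omega) :=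
    List.getElem_of_eq hpsi hiW
  have htail : U.tail[i] = U[i+1]'(by rw [List.length_tail] at hi2; omega) := by
    rw [List.getElem_tail]
  rw [htail, ← hwval, psi_getElem _ _ hiW, psi_getElem _ _ hi1]
  by_cases hi0 : i = 0
  · subst hi0
    rw [if_pos rfl, if_neg (by omega : ¬ (0:ℕ) + 1 = 0)]
    simp only [Nat.add_sub_cancel, Function.iterate_zero_apply, Function.iterate_one]
    rw [if_neg]
    · simp only [zero_add, Function.iterate_one, headI_eq_getD]
    · rintro ⟨hc2, hcne⟩
      -- the value (psi w)[1] would then be 0, contradicting no zeros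
      have h0 : (psi w)[0+1] = 0 := by
        rw [psi_getElem _ _ hiW, if_neg (by omega : ¬ (0:ℕ) + 1 = 0), if_pos]
        simp only [Nat.add_sub_cancel, Function.iterate_zero_apply, Function.iterate_one]
        exact ⟨hc2, hcne⟩
      exact psi_no_zero hm (h0 ▸ List.getElem_mem _)
  · rw [if_neg hi0, if_neg (by omega : ¬ i + 1 = 0)]
    simp only [Nat.add_sub_cancel, hiter]
    have hi1' : i - 1 + 1 = i := by omega
    rw [hi1']

lemma bld_unique (hb : GoodBase base) {L : ℕ}
    (hbase_u : ∀ w, Cinf w → D w = [] → w.length = L → w = base w.headI) :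
    ∀ U, IsWord U → U ≠ [] → ∀ w, Minimal w → (root w).length = L → psi w = U →
      w = bld base U := by
  intro U
  induction U with
  | nil => intro _ h; exact absurd rfl h
  | cons a V ih =>
    intro hU _ w hm hroot hpsi
    have hlen : height w = V.length + 1 := by
      rw [← psi_length w, hpsi]; simp
    have hspec := height_spec hm.2.1
    have ha : (psi w)[0]'(by rw [psi_length]; omega) = a := by
      rw [List.getElem_of_eq hpsi (by rw [psi_length]; omega)]
      rfl
    have hwa : w.headI = a := by
      rw [psi_getElem _ _ (by rw [psi_length]; omega), if_pos rfl, headI_eq_getD] at ha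
      exact ha
    cases hV : V with
    | nil =>
      subst hV
      simp only [List.length_nil] at hlen
      have hh1 : height w = 1 := by omega
      have hD : D w = [] := by
        have := hspec.1
        rw [hh1] at this
        exact this
      have hwr : root w = w := by unfold root; rw [hh1]; rfl
      have hwlen : w.length = L := by
        rw [hwr] at hroot
        exact hroot
      have := hbase_u w hm.1 hD hwlen
      rw [hwa] at this
      exact this
    | cons b V' =>
      subst hV
      simp only [List.length_cons] at hlen
      have h2 : 2 ≤ height w := by omega
      have hmD := minimal_D hm h2
      have hrD : (root (D w)).length = L := by rw [root_D hm h2]; exact hroot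
      have hpD : psi (D w) = b :: V' := by
        have := psi_D hm h2 hU hpsi
        simpa using this
      have hDw := ih (isWord_tail hU) (by simp) (D w) hmD hrD hpD
      have hstep := minimal_step hm (le_refl 1) (by omega : 1 < height w)
      simp only [Function.iterate_zero_apply, Function.iterate_one] at hstep
      rw [bld_cons (by simp : (b :: V') ≠ []), ← hDw, ← hwa]
      exact hstep

end Aux7

section Aux8

lemma trim1_eq_nil {t : List ℕ} (h : trim1 t = []) : t = [] ∨ t = [1] := by
  rcases trim1_cases t with ⟨hne, h1, h2⟩ | ⟨h1, h2⟩
  · right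
    rw [h2] at h
    cases t with
    | nil => exact absurd rfl hne
    | cons x l =>
      simp only [List.headI] at h1
      simp only [List.tail_cons] at h
      rw [h1, h]
  · left
    rw [h2] at h
    exact h

lemma rstrip_eq_nil {s : List ℕ} (h : rstrip s = []) : s = [] ∨ s = [1] := by
  rcases rstrip_cases s with ⟨_, _, h2⟩ | ⟨_, h2⟩
  · right
    rw [h2, h]
    rfl
  · left
    rw [← h2, h]

lemma rstrip_eq_one {s : List ℕ} (h : rstrip s = [1]) : s = [1, 1] := by
  rcases rstrip_cases s with ⟨_, _, h2⟩ | ⟨h1, h2⟩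
  · rw [h2, h]
    rfl
  · rw [h2] at h
    subst h
    simp at h1

lemma dtrim_eq_nil {s : List ℕ} (h : dtrim s = []) : s = [] ∨ s = [1] ∨ s = [1, 1] := by
  unfold dtrim at h
  rcases trim1_eq_nil h with h' | h'
  · rcases rstrip_eq_nil h' with h'' | h''
    · exact Or.inl h''
    · exact Or.inr (Or.inl h'')
  · exact Or.inr (Or.inr (rstrip_eq_one h'))

/-- Base for single-rooted minimal words. -/
def srBase : ℕ → List ℕ := fun a => [a]

/-- Base for double-rooted minimal words. -/
def drBase : ℕ → List ℕ := fun a => [a, 3 - a]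

lemma srBase_good : GoodBase srBase := by
  refine ⟨?_, fun a => rfl, fun a => by simp [srBase], fun a => rfl⟩
  intro a ha x hx
  simp only [srBase, List.mem_singleton] at hx
  subst hx
  exact ha

lemma drBase_good : GoodBase drBase := by
  refine ⟨?_, fun a => rfl, fun a => by simp [drBase], ?_⟩
  · intro a ha x hx
    simp only [drBase, List.mem_cons, List.mem_singleton] at hx
    rcases hx with rfl | rfl | hx
    · exact ha
    · rcases ha with rfl | rfl
      · right; rfl
      · left; rfl
    · simp at hx
  · intro a
    show dtrim (rle [a, 3 - a]) = []
    rw [rle_cons_cons_ne _ (three_sub_ne a).symm, rle_single]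
    rfl

lemma srBase_u : ∀ w, Cinf w → D w = [] → w.length = 1 → w = srBase w.headI := by
  intro w _ _ hlen
  cases w with
  | nil => simp at hlen
  | cons a t =>
    cases t with
    | nil => rfl
    | cons b t' => simp at hlen

lemma drBase_u : ∀ w, Cinf w → D w = [] → w.length = 2 → w = drBase w.headI := by
  intro w hc hD hlen
  have hw : IsWord w := by have := hc 0; simpa using this
  have hsum : (rle w).sum = 2 := by rw [rle_sum, hlen]
  rw [D_eq_dtrim] at hD
  rcases dtrim_eq_nil hD with h | h | h
  · rw [h] at hsum; simp at hsum
  · rw [h] at hsum; simp at hsum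
  · have hb := build_rle hw
    rw [h] at hb
    rw [← hb]
    rfl

lemma srm_spec {U : List ℕ} (hU : IsWord U) (hne : U ≠ []) :
    SRMin (bld srBase U) ∧ psi (bld srBase U) = U ∧ height (bld srBase U) = U.length := by
  refine ⟨⟨bld_minimal srBase_good hU hne, ?_⟩, bld_psi srBase_good hU hne,
    bld_height srBase_good hU hne⟩
  obtain ⟨a, _, hr⟩ := bld_root srBase_good hU hne
  rw [hr]
  rfl

lemma drm_spec {U : List ℕ} (hU : IsWord U) (hne : U ≠ []) :
    DRMin (bld drBase U) ∧ psi (bld drBase U) = U ∧ height (bld drBase U) = U.length := by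
  refine ⟨⟨bld_minimal drBase_good hU hne, ?_⟩, bld_psi drBase_good hU hne,
    bld_height drBase_good hU hne⟩
  obtain ⟨a, _, hr⟩ := bld_root drBase_good hU hne
  rw [hr]
  rfl

lemma srm_unique {U : List ℕ} (hU : IsWord U) (hne : U ≠ []) :
    ∀ w, SRMin w → psi w = U → w = bld srBase U := fun w hw hp =>
  bld_unique srBase_good srBase_u U hU hne w hw.1 hw.2 hp

lemma drm_unique {U : List ℕ} (hU : IsWord U) (hne : U ≠ []) :
    ∀ w, DRMin w → psi w = U → w = bld drBase U := fun w hw hp =>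
  bld_unique drBase_good drBase_u U hU hne w hw.1 hw.2 hp

lemma psi_isWord {w : List ℕ} (hm : Minimal w) : IsWord (psi w) := by
  intro x hx
  obtain ⟨i, hi, hval⟩ := List.mem_iff_getElem.mp hx
  rw [psi_getElem _ _ hi] at hval
  have hspec := height_spec hm.2.1
  have hih : i < height w := by rw [← psi_length w]; exact hi
  by_cases hi0 : i = 0
  · subst hi0
    rw [if_pos rfl, headI_eq_getD] at hval
    have hw0 : IsWord w := by have := hm.1 0; simpa using this
    have hne0 : w ≠ [] := by have := hspec.2 0 hm.2.1; simpa using this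
    rw [← hval]
    exact headI_word hw0 hne0
  · rw [if_neg hi0] at hval
    split_ifs at hval with hc
    · exfalso
      exact psi_no_zero hm (hval ▸ hx)
    · rw [← hval, headI_eq_getD]
      exact headI_word (hm.1 i) (hspec.2 i hih)

end Aux8

/-- for every U ∈ Σ^k with k ≥ 1 there is a unique single-rooted and a
unique double-rooted minimal word with left frontier U; left frontiers of minimal
words contain no 0; and Ψ gives bijections between single-rooted (resp.
double-rooted) minimal words of height k and Σ^k. -/
theorem minimal_words_bijection (k : ℕ) (hk : 1 ≤ k) :
    (∀ U : List ℕ, IsWord U → U.length = k →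
      (∃! w, SRMin w ∧ psi w = U) ∧ (∃! w, DRMin w ∧ psi w = U)) ∧
    (∀ w, Minimal w → 0 ∉ psi w) ∧
    Set.BijOn psi {w | SRMin w ∧ height w = k} {U | IsWord U ∧ U.length = k} ∧
    Set.BijOn psi {w | DRMin w ∧ height w = k} {U | IsWord U ∧ U.length = k} := by
  have hne : ∀ U : List ℕ, U.length = k → U ≠ [] := by
    intro U hlen h
    subst h
    simp at hlen
    omega
  refine ⟨?_, fun w hm => psi_no_zero hm, ?_, ?_⟩
  · intro U hU hlen
    constructor
    · obtain ⟨h1, h2, _⟩ := srm_spec hU (hne U hlen)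
      exact ⟨bld srBase U, ⟨h1, h2⟩, fun w ⟨hw1, hw2⟩ => srm_unique hU (hne U hlen) w hw1 hw2⟩
    · obtain ⟨h1, h2, _⟩ := drm_spec hU (hne U hlen)
      exact ⟨bld drBase U, ⟨h1, h2⟩, fun w ⟨hw1, hw2⟩ => drm_unique hU (hne U hlen) w hw1 hw2⟩
  · refine ⟨?_, ?_, ?_⟩
    · rintro w ⟨hw, hh⟩
      exact ⟨psi_isWord hw.1, by rw [psi_length, hh]⟩
    · rintro w1 ⟨hw1, hh1⟩ w2 ⟨hw2, hh2⟩ he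
      have hU : IsWord (psi w1) := psi_isWord hw1.1
      have hUne : psi w1 ≠ [] := by
        apply hne _ (by rw [psi_length, hh1])
      rw [srm_unique hU hUne w1 hw1 rfl, srm_unique hU hUne w2 hw2 he.symm]
    · rintro U ⟨hUw, hUl⟩
      obtain ⟨h1, h2, h3⟩ := srm_spec hUw (hne U hUl)
      exact ⟨bld srBase U, ⟨h1, by rw [h3, hUl]⟩, h2⟩
  · refine ⟨?_, ?_, ?_⟩
    · rintro w ⟨hw, hh⟩
      exact ⟨psi_isWord hw.1, by rw [psi_length, hh]⟩
    · rintro w1 ⟨hw1, hh1⟩ w2 ⟨hw2, hh2⟩ he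
      have hU : IsWord (psi w1) := psi_isWord hw1.1
      have hUne : psi w1 ≠ [] := by
        apply hne _ (by rw [psi_length, hh1])
      rw [drm_unique hU hUne w1 hw1 rfl, drm_unique hU hUne w2 hw2 he.symm]
    · rintro U ⟨hUw, hUl⟩
      obtain ⟨h1, h2, h3⟩ := drm_spec hUw (hne U hUl)
      exact ⟨bld drBase U, ⟨h1, by rw [h3, hUl]⟩, h2⟩

end CInfWords
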